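/- Let a: ℤ → ℝ be a finitely supported real-valued 1D filter that has symmetry, i.e. there exist ε_a ∈ {1,−1} and c_a ∈ ℤ with a(c_a − k) = ε_a a(k) for all k ∈ ℤ, and suppose 1 − |â(ω)|² − |â(ω+π)|² ≥ 0 for all ω ∈ ℝ. Let u: ℤ → ℝ be finitely supported with |û(2ω)|² = 1 − |â(ω)|² − |â(ω+π)|² for all ω ∈ ℝ, let ε ∈ {1,−1} and let c_b be an odd integer. Define b₂ by b̂₂(ω) := ½(û(2ω) + ε e^{−i c_b ω}·conj(û(2ω))) (a trigonometric polynomial with integer frequencies, hence a 1D filter), and set b̂₁(ω) := e^{−iω}·conj(â(ω+π)), b̂₃(ω) := e^{−iω}·conj(b̂₂(ω+π)). Then {a; b₁, b₂, b₃} is a tight 2-framelet filter bank and each of b₁, b₂, b₃ has symmetry, i.e. for each ℓ ∈ {1,2,3} there exist ε_ℓ ∈ {1,−1} and c_ℓ ∈ ℤ with b_ℓ(c_ℓ − k) = ε_ℓ b_ℓ(k) for all k ∈ ℤ. -/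

import Mathlib

open Complex Real

/-- Fourier series of a finitely supported 1D filter. -/
noncomputable def fhat1 (u : ℤ → ℂ) (ω : ℝ) : ℂ :=
  ∑ᶠ k : ℤ, u k * Complex.exp (-(Complex.I) * (k : ℂ) * (ω : ℂ))
-- auxiliary lemmas (to be inserted between fhat1 def and theorem)
section Aux

lemma fhat1_eq_sum (f : ℤ → ℂ) {S : Finset ℤ} (hS : Function.support f ⊆ S) (ω : ℝ) :
    fhat1 f ω = ∑ k ∈ S, f k * Complex.exp (-(Complex.I) * (k : ℂ) * (ω : ℂ)) := by
  refine finsum_eq_sum_of_support_subset _ ?_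
  intro k hk
  refine hS ?_
  intro h0
  simp [Function.mem_support, h0] at hk

lemma exp_int_zpow (k : ℤ) (ω : ℝ) :
    Complex.exp (-(Complex.I) * (k : ℂ) * (ω : ℂ)) = (Complex.exp (-(Complex.I) * ω)) ^ k := by
  rw [← Complex.exp_int_mul]; congr 1; ring

lemma exp_neg_pi_I : Complex.exp (-(π * Complex.I)) = -1 := by
  rw [Complex.exp_neg, Complex.exp_pi_mul_I]; norm_num

lemma fhat1_eq_zero (f : ℤ → ℂ) (hf : (Function.support f).Finite)
    (h : ∀ ω : ℝ, fhat1 f ω = 0) : ∀ k, f k = 0 := by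
  classical
  set S := hf.toFinset with hSdef
  have hsupp : Function.support f ⊆ S := by simp [hSdef]
  obtain ⟨N, hN⟩ : ∃ N : ℤ, ∀ k ∈ S, 0 ≤ k + N := by
    rcases S.eq_empty_or_nonempty with h0 | hne
    · exact ⟨0, by simp [h0]⟩
    · exact ⟨-(S.min' hne), fun k hk => by linarith [S.min'_le k hk]⟩
  set P : Polynomial ℂ := ∑ k ∈ S, Polynomial.C (f k) * Polynomial.X ^ (k + N).toNat with hPdef
  have hev : ∀ ω : ℝ, P.eval (Complex.exp (-(Complex.I) * ω)) = 0 := by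
    intro ω
    have hx : Complex.exp (-(Complex.I) * (ω : ℂ)) ≠ 0 := Complex.exp_ne_zero _
    have hPe : P.eval (Complex.exp (-(Complex.I) * (ω : ℂ)))
        = Complex.exp (-(Complex.I) * (ω : ℂ)) ^ N * fhat1 f ω := by
      rw [fhat1_eq_sum f hsupp, Finset.mul_sum, hPdef]
      rw [Polynomial.eval_finset_sum]
      refine Finset.sum_congr rfl fun k hk => ?_
      rw [Polynomial.eval_mul, Polynomial.eval_C, Polynomial.eval_pow, Polynomial.eval_X]
      rw [exp_int_zpow, ← zpow_natCast, Int.toNat_of_nonneg (hN k hk), zpow_add₀ hx]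
      ring
    rw [hPe, h ω, mul_zero]
  have hP : P = 0 := by
    apply Polynomial.eq_zero_of_infinite_isRoot
    apply Set.infinite_of_injective_forall_mem
      (f := fun n : ℕ => Complex.exp (-(Complex.I) * ((Real.pi / (n + 2) : ℝ) : ℂ)))
    · intro n m hnm
      have hre : ∀ j : ℕ, (Complex.exp (-(Complex.I) * ((Real.pi / (j + 2) : ℝ) : ℂ))).re
          = Real.cos (Real.pi / (j + 2)) := by
        intro j
        have : -(Complex.I) * ((Real.pi / (j + 2) : ℝ) : ℂ)
            = ((-(Real.pi / (j + 2)) : ℝ) : ℂ) * Complex.I := by push_cast; ring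
        rw [this, Complex.exp_ofReal_mul_I_re, Real.cos_neg]
      have hnm' : Complex.exp (-(Complex.I) * ((Real.pi / (n + 2) : ℝ) : ℂ))
          = Complex.exp (-(Complex.I) * ((Real.pi / (m + 2) : ℝ) : ℂ)) := hnm
      have hco : Real.cos (Real.pi / (n + 2)) = Real.cos (Real.pi / (m + 2)) := by
        rw [← hre n, ← hre m, hnm']
      have hmem : ∀ j : ℕ, Real.pi / (j + 2) ∈ Set.Icc (0 : ℝ) Real.pi := by
        intro j
        constructor
        · positivity
        · rw [div_le_iff₀ (by positivity)]
          nlinarith [Real.pi_pos, (by positivity : (0:ℝ) < (j:ℝ) + 2)]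
      have heq := Real.injOn_cos (hmem n) (hmem m) hco
      have h2 : Real.pi * ((m : ℝ) + 2) = Real.pi * ((n : ℝ) + 2) :=
        (div_eq_div_iff (by positivity) (by positivity)).mp heq
      have h3 : ((m : ℝ) + 2) = ((n : ℝ) + 2) :=
        mul_left_cancel₀ (ne_of_gt Real.pi_pos) h2
      have : (n : ℝ) = (m : ℝ) := by linarith
      exact_mod_cast this
    · intro n
      exact hev _
  intro k
  by_cases hk : k ∈ S
  · have hc := congrArg (fun p => Polynomial.coeff p (k + N).toNat) hP
    simp only [Polynomial.coeff_zero, hPdef] at hc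
    rw [Polynomial.finset_sum_coeff] at hc
    rw [Finset.sum_eq_single_of_mem k hk (fun j hj hjk => by
      have h1 := hN j hj
      have h2 := hN k hk
      have hne : (k + N).toNat ≠ (j + N).toNat := by omega
      simp [Polynomial.coeff_C_mul, Polynomial.coeff_X_pow, hne])] at hc
    simpa [Polynomial.coeff_C_mul, Polynomial.coeff_X_pow] using hc
  · by_contra h0
    exact hk (hsupp h0)

lemma fhat1_injective (f g : ℤ → ℂ) (hf : (Function.support f).Finite)
    (hg : (Function.support g).Finite) (h : ∀ ω : ℝ, fhat1 f ω = fhat1 g ω) : f = g := by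
  funext k
  have hsub : ∀ ω : ℝ, fhat1 (fun j => f j - g j) ω = 0 := by
    intro ω
    have : fhat1 (fun j => f j - g j) ω = fhat1 f ω - fhat1 g ω := by
      unfold fhat1
      rw [← finsum_sub_distrib]
      · exact finsum_congr fun j => by ring
      · exact hf.subset (fun j hj => by
          simp only [Function.mem_support] at hj ⊢
          intro h0; exact hj (by simp [h0]))
      · exact hg.subset (fun j hj => by
          simp only [Function.mem_support] at hj ⊢
          intro h0; exact hj (by simp [h0]))
    rw [this, h ω, sub_self]
  have hfin : (Function.support fun j => f j - g j).Finite := by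
    refine (hf.union hg).subset ?_
    intro j hj
    simp only [Function.mem_support, Set.mem_union] at hj ⊢
    by_contra hc
    push_neg at hc
    exact hj (by simp [hc.1, hc.2])
  have := fhat1_eq_zero _ hfin hsub k
  exact sub_eq_zero.mp this

lemma fhat1_periodic (f : ℤ → ℂ) (ω : ℝ) : fhat1 f (ω + 2 * π) = fhat1 f ω := by
  unfold fhat1
  refine finsum_congr fun k => ?_
  have h0 : (-(Complex.I) * (k : ℂ) * ((ω + 2 * π : ℝ) : ℂ))
      = -(Complex.I) * k * (ω : ℂ) + ((-k : ℤ) : ℂ) * (2 * (π : ℂ) * Complex.I) := by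
    push_cast; ring
  rw [h0, Complex.exp_add, Complex.exp_int_mul_two_pi_mul_I, mul_one]

lemma fhat1_comb (p q : ℂ) (f g : ℤ → ℂ) (hf : (Function.support f).Finite)
    (hg : (Function.support g).Finite) (ω : ℝ) :
    fhat1 (fun k => p * f k + q * g k) ω = p * fhat1 f ω + q * fhat1 g ω := by
  unfold fhat1
  have hf' : (Function.support fun k => f k * Complex.exp (-(Complex.I) * (k : ℂ) * ω)).Finite :=
    hf.subset (fun j hj => by
      simp only [Function.mem_support] at hj ⊢
      intro h0; exact hj (by simp [h0]))
  have hg' : (Function.support fun k => g k * Complex.exp (-(Complex.I) * (k : ℂ) * ω)).Finite :=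
    hg.subset (fun j hj => by
      simp only [Function.mem_support] at hj ⊢
      intro h0; exact hj (by simp [h0]))
  rw [mul_finsum _ p, mul_finsum _ q, ← finsum_add_distrib]
  · exact finsum_congr fun k => by ring
  · exact hf'.subset (fun j hj => by
      simp only [Function.mem_support] at hj ⊢
      intro h0; exact hj (by rw [h0, mul_zero]))
  · exact hg'.subset (fun j hj => by
      simp only [Function.mem_support] at hj ⊢
      intro h0; exact hj (by rw [h0, mul_zero]))

lemma fhat1_reindex (v : ℤ → ℂ) {S : Finset ℤ} (hS : Function.support v ⊆ S)
    (c d : ℤ) (hd : d ≠ 0) (W : ℤ → ℂ)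
    (hW : ∀ k : ℤ, W (c + d * k) = v k)
    (hW0 : ∀ n : ℤ, (∀ k : ℤ, n ≠ c + d * k) → W n = 0) (ω : ℝ) :
    fhat1 W ω = ∑ k ∈ S, v k * Complex.exp (-(Complex.I) * ((c : ℂ) + (d : ℂ) * k) * ω) := by
  have hinj : Function.Injective (fun k : ℤ => c + d * k) := by
    intro x y hxy
    simp only [add_right_inj] at hxy
    exact mul_left_cancel₀ hd hxy
  have hsub : Function.support W ⊆ ((S.map ⟨fun k => c + d * k, hinj⟩ : Finset ℤ) : Set ℤ) := by
    intro n hn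
    simp only [Function.mem_support] at hn
    by_cases hex : ∃ k : ℤ, n = c + d * k
    · obtain ⟨k, rfl⟩ := hex
      simp only [Finset.coe_map, Set.mem_image, Finset.mem_coe, Function.Embedding.coeFn_mk]
      refine ⟨k, hS ?_, rfl⟩
      rw [Function.mem_support]
      intro h0
      rw [hW k] at hn
      exact hn h0
    · push_neg at hex
      exact absurd (hW0 n hex) hn
  rw [fhat1_eq_sum W hsub, Finset.sum_map]
  refine Finset.sum_congr rfl fun k hk => ?_
  simp only [Function.Embedding.coeFn_mk]
  rw [hW k]
  congr 2
  push_cast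
  ring

lemma normSq_exp_of_re_zero (z : ℂ) (hz : z.re = 0) :
    Complex.normSq (Complex.exp z) = 1 := by
  rw [Complex.normSq_eq_norm_sq, Complex.norm_exp, hz, Real.exp_zero]; norm_num

lemma exp_shift_pi (t : ℝ) :
    Complex.exp (-(Complex.I) * ((t + π : ℝ) : ℂ)) = -Complex.exp (-(Complex.I) * (t : ℂ)) := by
  have h0 : (-(Complex.I) * ((t + π : ℝ) : ℂ)) = -(Complex.I) * (t : ℂ) + -(π * Complex.I) := by
    push_cast; ring
  rw [h0, Complex.exp_add, exp_neg_pi_I, mul_neg_one]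

lemma neg_one_zpow_self_inv (n : ℤ) : ((-1 : ℂ) ^ n)⁻¹ = (-1 : ℂ) ^ n := by
  refine inv_eq_of_mul_eq_one_right ?_
  rw [← mul_zpow]
  norm_num

lemma neg_one_zpow_sub (m n : ℤ) : (-1 : ℂ) ^ (m - n) = (-1 : ℂ) ^ m * (-1 : ℂ) ^ n := by
  rw [sub_eq_add_neg, zpow_add₀ (by norm_num : (-1:ℂ) ≠ 0), zpow_neg, neg_one_zpow_self_inv]

end Aux

lemma conj_exp_arg (k : ℤ) (x : ℝ) :
    (starRingEnd ℂ) (-(Complex.I) * (k : ℂ) * (x : ℂ)) = Complex.I * (k : ℂ) * (x : ℂ) := by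
  rw [map_mul, map_mul, map_neg, Complex.conj_I, Complex.conj_ofReal, map_intCast]
  ring
lemma even_neg_one_zpow {n : ℤ} (h : Even n) : (-1:ℂ)^n = 1 := by
  rw [h.neg_zpow, one_zpow]

/-- construction of double canonical tight 2-framelet filter banks with symmetry
(case 1 of Theorem `thm:double:2`). -/
theorem stmt_6 (a : ℤ → ℝ) (hafin : (Function.support a).Finite)
    (εa : ℝ) (hεa : εa = 1 ∨ εa = -1) (ca : ℤ) (hasym : ∀ k : ℤ, a (ca - k) = εa * a k)
    (hpos : ∀ ω : ℝ, 0 ≤ 1 - Complex.normSq (fhat1 (fun k => (a k : ℂ)) ω)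
        - Complex.normSq (fhat1 (fun k => (a k : ℂ)) (ω + π)))
    (u : ℤ → ℝ) (hufin : (Function.support u).Finite)
    (hu : ∀ ω : ℝ, Complex.normSq (fhat1 (fun k => (u k : ℂ)) (2 * ω))
      = 1 - Complex.normSq (fhat1 (fun k => (a k : ℂ)) ω)
          - Complex.normSq (fhat1 (fun k => (a k : ℂ)) (ω + π)))
    (ε : ℝ) (hε : ε = 1 ∨ ε = -1) (cb : ℤ) (hcb : Odd cb)
    (b₁ b₂ b₃ : ℤ → ℂ)
    (hb₁fin : (Function.support b₁).Finite) (hb₂fin : (Function.support b₂).Finite)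
    (hb₃fin : (Function.support b₃).Finite)
    (hb₂ : ∀ ω : ℝ, fhat1 b₂ ω
      = (1 / 2 : ℂ) * (fhat1 (fun k => (u k : ℂ)) (2 * ω)
          + (ε : ℂ) * Complex.exp (-(Complex.I) * (cb : ℂ) * (ω : ℂ)) *
            (starRingEnd ℂ) (fhat1 (fun k => (u k : ℂ)) (2 * ω))))
    (hb₁ : ∀ ω : ℝ, fhat1 b₁ ω
      = Complex.exp (-(Complex.I) * (ω : ℂ)) *
          (starRingEnd ℂ) (fhat1 (fun k => (a k : ℂ)) (ω + π)))
    (hb₃ : ∀ ω : ℝ, fhat1 b₃ ω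
      = Complex.exp (-(Complex.I) * (ω : ℂ)) * (starRingEnd ℂ) (fhat1 b₂ (ω + π))) :
    -- {a; b₁, b₂, b₃} is a tight 2-framelet filter bank
    ((∀ ω : ℝ, Complex.normSq (fhat1 (fun k => (a k : ℂ)) ω) + Complex.normSq (fhat1 b₁ ω)
        + Complex.normSq (fhat1 b₂ ω) + Complex.normSq (fhat1 b₃ ω) = 1) ∧
      (∀ ω : ℝ, (starRingEnd ℂ) (fhat1 (fun k => (a k : ℂ)) ω) *
            fhat1 (fun k => (a k : ℂ)) (ω + π)
        + (starRingEnd ℂ) (fhat1 b₁ ω) * fhat1 b₁ (ω + π)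
        + (starRingEnd ℂ) (fhat1 b₂ ω) * fhat1 b₂ (ω + π)
        + (starRingEnd ℂ) (fhat1 b₃ ω) * fhat1 b₃ (ω + π) = 0)) ∧
    -- each of b₁, b₂, b₃ has symmetry
    ((∃ ε₁ : ℂ, (ε₁ = 1 ∨ ε₁ = -1) ∧ ∃ c₁ : ℤ, ∀ k : ℤ, b₁ (c₁ - k) = ε₁ * b₁ k) ∧
      (∃ ε₂ : ℂ, (ε₂ = 1 ∨ ε₂ = -1) ∧ ∃ c₂ : ℤ, ∀ k : ℤ, b₂ (c₂ - k) = ε₂ * b₂ k) ∧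
      (∃ ε₃ : ℂ, (ε₃ = 1 ∨ ε₃ = -1) ∧ ∃ c₃ : ℤ, ∀ k : ℤ, b₃ (c₃ - k) = ε₃ * b₃ k)) := by
  classical
  -- support of the complexifications
  have haC : Function.support (fun k => ((a k : ℝ) : ℂ)) ⊆ (hafin.toFinset : Set ℤ) := by
    intro k hk
    simp only [Function.mem_support] at hk
    simp only [Set.Finite.coe_toFinset, Function.mem_support]
    intro h; exact hk (by rw [h]; simp)
  have huC : Function.support (fun k => ((u k : ℝ) : ℂ)) ⊆ (hufin.toFinset : Set ℤ) := by
    intro k hk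
    simp only [Function.mem_support] at hk
    simp only [Set.Finite.coe_toFinset, Function.mem_support]
    intro h; exact hk (by rw [h]; simp)
  -- periodicity for u-hat at 2(ω+π)
  have hper2 : ∀ ω : ℝ, fhat1 (fun k => ((u k : ℝ) : ℂ)) (2 * (ω + π))
      = fhat1 (fun k => ((u k : ℝ) : ℂ)) (2 * ω) := by
    intro ω
    have h2 : 2 * (ω + π) = 2 * ω + 2 * π := by ring
    rw [h2, fhat1_periodic]
  have hEcbπ : ∀ ω : ℝ, Complex.exp (-(Complex.I) * (cb : ℂ) * ((ω + π : ℝ) : ℂ))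
      = -(Complex.exp (-(Complex.I) * (cb : ℂ) * (ω : ℂ))) := by
    intro ω
    have h0 : -(Complex.I) * (cb : ℂ) * ((ω + π : ℝ) : ℂ)
        = -(Complex.I) * (cb : ℂ) * (ω : ℂ) + (cb : ℂ) * (-(π * Complex.I)) := by
      push_cast; ring
    rw [h0, Complex.exp_add, Complex.exp_int_mul, exp_neg_pi_I, hcb.neg_one_zpow, mul_neg_one]
  refine ⟨⟨?_, ?_⟩, ?_⟩
  · -- first tightness identity
    intro ω
    have hE1 : Complex.normSq (Complex.exp (-(Complex.I) * (ω : ℂ))) = 1 :=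
      normSq_exp_of_re_zero _ (by simp)
    have hEcbn : Complex.normSq (Complex.exp (-(Complex.I) * (cb : ℂ) * (ω : ℂ))) = 1 :=
      normSq_exp_of_re_zero _ (by simp [Complex.mul_re, Complex.mul_im])
    have hhalf : Complex.normSq ((1 : ℂ) / 2) = 1 / 4 := by
      have h0 : ((1 : ℂ) / 2) = (((1 : ℝ) / 2 : ℝ) : ℂ) := by norm_num
      rw [h0, Complex.normSq_ofReal]; norm_num
    have hεn : Complex.normSq ((ε : ℝ) : ℂ) = 1 := by
      rcases hε with h | h <;> rw [h] <;> norm_num [Complex.normSq_ofReal]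
    have hb1n : Complex.normSq (fhat1 b₁ ω)
        = Complex.normSq (fhat1 (fun k => ((a k : ℝ) : ℂ)) (ω + π)) := by
      rw [hb₁ ω, Complex.normSq_mul, hE1, Complex.normSq_conj, one_mul]
    have hyn : Complex.normSq ((ε : ℂ) * Complex.exp (-(Complex.I) * (cb : ℂ) * (ω : ℂ)) *
          (starRingEnd ℂ) (fhat1 (fun k => ((u k : ℝ) : ℂ)) (2 * ω)))
        = Complex.normSq (fhat1 (fun k => ((u k : ℝ) : ℂ)) (2 * ω)) := by
      rw [Complex.normSq_mul, Complex.normSq_mul, hεn, hEcbn, Complex.normSq_conj]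
      ring
    have hb2n : Complex.normSq (fhat1 b₂ ω)
        = (1 / 4) * Complex.normSq (fhat1 (fun k => ((u k : ℝ) : ℂ)) (2 * ω)
            + (ε : ℂ) * Complex.exp (-(Complex.I) * (cb : ℂ) * (ω : ℂ)) *
              (starRingEnd ℂ) (fhat1 (fun k => ((u k : ℝ) : ℂ)) (2 * ω))) := by
      rw [hb₂ ω, Complex.normSq_mul, hhalf]
    have hb3n : Complex.normSq (fhat1 b₃ ω)
        = (1 / 4) * Complex.normSq (fhat1 (fun k => ((u k : ℝ) : ℂ)) (2 * ω)
            - (ε : ℂ) * Complex.exp (-(Complex.I) * (cb : ℂ) * (ω : ℂ)) *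
              (starRingEnd ℂ) (fhat1 (fun k => ((u k : ℝ) : ℂ)) (2 * ω))) := by
      rw [hb₃ ω, Complex.normSq_mul, hE1, Complex.normSq_conj, one_mul,
        hb₂ (ω + π), hper2 ω, hEcbπ ω]
      have h0 : (1 / 2 : ℂ) * (fhat1 (fun k => ((u k : ℝ) : ℂ)) (2 * ω)
            + (ε : ℂ) * -(Complex.exp (-(Complex.I) * (cb : ℂ) * (ω : ℂ))) *
              (starRingEnd ℂ) (fhat1 (fun k => ((u k : ℝ) : ℂ)) (2 * ω)))
          = (1 / 2 : ℂ) * (fhat1 (fun k => ((u k : ℝ) : ℂ)) (2 * ω)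
            - (ε : ℂ) * Complex.exp (-(Complex.I) * (cb : ℂ) * (ω : ℂ)) *
              (starRingEnd ℂ) (fhat1 (fun k => ((u k : ℝ) : ℂ)) (2 * ω))) := by ring
      rw [h0, Complex.normSq_mul, hhalf]
    rw [hb1n, hb2n, hb3n, Complex.normSq_add, Complex.normSq_sub]
    have hval := hu ω
    rw [hyn] at *
    linarith [hu ω]
  · -- second tightness identity
    intro ω
    have hωπ : (ω + π) + π = ω + 2 * π := by ring
    have hb1π : fhat1 b₁ (ω + π)
        = -(Complex.exp (-(Complex.I) * (ω : ℂ))) *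
            (starRingEnd ℂ) (fhat1 (fun k => ((a k : ℝ) : ℂ)) ω) := by
      rw [hb₁ (ω + π), hωπ, fhat1_periodic, exp_shift_pi]
    have hb3π : fhat1 b₃ (ω + π)
        = -(Complex.exp (-(Complex.I) * (ω : ℂ))) * (starRingEnd ℂ) (fhat1 b₂ ω) := by
      rw [hb₃ (ω + π), hωπ, fhat1_periodic, exp_shift_pi]
    rw [hb₁ ω, hb1π, hb₃ ω, hb3π]
    have he : Complex.exp (-(Complex.I) * (ω : ℂ)) *
        (starRingEnd ℂ) (Complex.exp (-(Complex.I) * (ω : ℂ))) = 1 := by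
      rw [← Complex.exp_conj, ← Complex.exp_add]
      have h0 : -(Complex.I) * (ω : ℂ) + (starRingEnd ℂ) (-(Complex.I) * (ω : ℂ)) = 0 := by
        rw [map_mul, map_neg, Complex.conj_I, Complex.conj_ofReal]
        ring
      rw [h0, Complex.exp_zero]
    simp only [map_mul, map_neg, Complex.conj_conj]
    linear_combination (-(fhat1 (fun k => ((a k : ℝ) : ℂ)) (ω + π)) *
        (starRingEnd ℂ) (fhat1 (fun k => ((a k : ℝ) : ℂ)) ω)
      - fhat1 b₂ (ω + π) * (starRingEnd ℂ) (fhat1 b₂ ω)) * he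
  · -- symmetry
    -- b₁ in the time domain
    have hb₁eq : b₁ = (fun n => (-1 : ℂ) ^ (1 - n) * ((a (1 - n) : ℝ) : ℂ)) := by
      apply fhat1_injective _ _ hb₁fin
      · refine (hafin.image (fun k => 1 - k)).subset ?_
        intro n hn
        simp only [Function.mem_support] at hn
        have ha' : a (1 - n) ≠ 0 := by
          intro h; exact hn (by rw [h]; simp)
        exact ⟨1 - n, ha', by ring⟩
      · intro ω
        rw [hb₁ ω]
        have hsv : Function.support (fun k => (-1 : ℂ) ^ k * ((a k : ℝ) : ℂ))
            ⊆ (hafin.toFinset : Set ℤ) := by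
          intro k hk
          simp only [Function.mem_support] at hk
          simp only [Set.Finite.coe_toFinset, Function.mem_support]
          intro h; exact hk (by rw [h]; simp)
        have hW : ∀ k : ℤ, (fun n => (-1 : ℂ) ^ (1 - n) * ((a (1 - n) : ℝ) : ℂ)) (1 + (-1) * k)
            = (-1 : ℂ) ^ k * ((a k : ℝ) : ℂ) := by
          intro k
          simp only
          have h1 : (1 : ℤ) - (1 + (-1) * k) = k := by ring
          rw [h1]
        have hW0 : ∀ n : ℤ, (∀ k : ℤ, n ≠ 1 + (-1) * k) →
            (fun n => (-1 : ℂ) ^ (1 - n) * ((a (1 - n) : ℝ) : ℂ)) n = 0 := by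
          intro n h
          exact absurd (by ring : n = 1 + (-1) * (1 - n)) (h (1 - n))
        rw [fhat1_reindex _ hsv 1 (-1) (by norm_num) _ hW hW0 ω,
          fhat1_eq_sum _ haC (ω + π), map_sum, Finset.mul_sum]
        refine Finset.sum_congr rfl fun k hk => ?_
        rw [map_mul, Complex.conj_ofReal, ← Complex.exp_conj]
        rw [conj_exp_arg k (ω + π)]
        have hsplit : Complex.I * (k : ℂ) * ((ω + π : ℝ) : ℂ)
            = Complex.I * (k : ℂ) * (ω : ℂ) + (k : ℂ) * ((π : ℂ) * Complex.I) := by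
          push_cast; ring
        rw [hsplit, Complex.exp_add, Complex.exp_int_mul, Complex.exp_pi_mul_I]
        have harg : -(Complex.I) * (((1 : ℤ) : ℂ) + ((-1 : ℤ) : ℂ) * (k : ℂ)) * (ω : ℂ)
            = -(Complex.I) * (ω : ℂ) + Complex.I * (k : ℂ) * (ω : ℂ) := by
          push_cast; ring
        rw [harg, Complex.exp_add]
        ring
    -- b₂ in the time domain
    have hb₂eq : b₂ = (fun n => (1 / 2 : ℂ) * (if (2 : ℤ) ∣ n then ((u (n / 2) : ℝ) : ℂ) else 0)
        + ((ε : ℝ) : ℂ) / 2 * (if (2 : ℤ) ∣ (cb - n) then ((u ((cb - n) / 2) : ℝ) : ℂ) else 0)) := by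
      apply fhat1_injective _ _ hb₂fin
      · refine ((hufin.image (fun k => 2 * k)).union
          (hufin.image (fun k => cb - 2 * k))).subset ?_
        intro n hn
        simp only [Function.mem_support] at hn
        by_contra hmem
        apply hn
        simp only [Set.mem_union, Set.mem_image, Function.mem_support, not_or, not_exists,
          not_and] at hmem
        have h1 : (if (2 : ℤ) ∣ n then ((u (n / 2) : ℝ) : ℂ) else 0) = 0 := by
          split_ifs with h
          · have hn2 : 2 * (n / 2) = n := Int.mul_ediv_cancel' h
            have := hmem.1 (n / 2)
            have hu0 : u (n / 2) = 0 := by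
              by_contra hu0
              exact this hu0 hn2
            rw [hu0]; simp
          · rfl
        have h2 : (if (2 : ℤ) ∣ (cb - n) then ((u ((cb - n) / 2) : ℝ) : ℂ) else 0) = 0 := by
          split_ifs with h
          · have hn2 : 2 * ((cb - n) / 2) = cb - n := Int.mul_ediv_cancel' h
            have := hmem.2 ((cb - n) / 2)
            have hu0 : u ((cb - n) / 2) = 0 := by
              by_contra hu0
              exact this hu0 (by omega)
            rw [hu0]; simp
          · rfl
        rw [h1, h2]
        ring
      · intro ω
        rw [hb₂ ω]
        have hχfin : (Function.support
            (fun n : ℤ => if (2 : ℤ) ∣ n then ((u (n / 2) : ℝ) : ℂ) else 0)).Finite := by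
          refine (hufin.image (fun k => 2 * k)).subset ?_
          intro n hn
          simp only [Function.mem_support] at hn
          split_ifs at hn with h
          · refine ⟨n / 2, ?_, Int.mul_ediv_cancel' h⟩
            intro h0; exact hn (by rw [h0]; simp)
          · exact absurd rfl hn
        have hψfin : (Function.support
            (fun n : ℤ => if (2 : ℤ) ∣ (cb - n) then ((u ((cb - n) / 2) : ℝ) : ℂ) else 0)).Finite := by
          refine (hufin.image (fun k => cb - 2 * k)).subset ?_
          intro n hn
          simp only [Function.mem_support] at hn
          split_ifs at hn with h
          · have hn2 : 2 * ((cb - n) / 2) = cb - n := Int.mul_ediv_cancel' h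
            refine ⟨(cb - n) / 2, ?_, by show cb - 2 * ((cb - n) / 2) = n; omega⟩
            intro h0; exact hn (by rw [h0]; simp)
          · exact absurd rfl hn
        rw [fhat1_comb ((1 : ℂ) / 2) (((ε : ℝ) : ℂ) / 2) _ _ hχfin hψfin ω]
        have hχ : fhat1 (fun n : ℤ => if (2 : ℤ) ∣ n then ((u (n / 2) : ℝ) : ℂ) else 0) ω
            = fhat1 (fun k => ((u k : ℝ) : ℂ)) (2 * ω) := by
          have hW : ∀ k : ℤ, (fun n : ℤ => if (2 : ℤ) ∣ n then ((u (n / 2) : ℝ) : ℂ) else 0)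
              (0 + 2 * k) = ((u k : ℝ) : ℂ) := by
            intro k
            simp only
            rw [if_pos ⟨k, by ring⟩]
            have h1 : (0 + 2 * k) / 2 = k := by omega
            rw [h1]
          have hW0 : ∀ n : ℤ, (∀ k : ℤ, n ≠ 0 + 2 * k) →
              (fun n : ℤ => if (2 : ℤ) ∣ n then ((u (n / 2) : ℝ) : ℂ) else 0) n = 0 := by
            intro n h
            simp only
            split_ifs with hd
            · obtain ⟨m, hm⟩ := hd
              exact absurd (by omega : n = 0 + 2 * m) (h m)
            · rfl
          rw [fhat1_reindex _ huC 0 2 (by norm_num) _ hW hW0 ω,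
            fhat1_eq_sum _ huC (2 * ω)]
          refine Finset.sum_congr rfl fun k hk => ?_
          have harg : -(Complex.I) * (((0 : ℤ) : ℂ) + ((2 : ℤ) : ℂ) * (k : ℂ)) * (ω : ℂ)
              = -(Complex.I) * (k : ℂ) * ((2 * ω : ℝ) : ℂ) := by
            push_cast; ring
          rw [harg]
        have hψ : fhat1 (fun n : ℤ => if (2 : ℤ) ∣ (cb - n) then ((u ((cb - n) / 2) : ℝ) : ℂ)
              else 0) ω
            = Complex.exp (-(Complex.I) * (cb : ℂ) * (ω : ℂ)) *
                (starRingEnd ℂ) (fhat1 (fun k => ((u k : ℝ) : ℂ)) (2 * ω)) := by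
          have hW : ∀ k : ℤ, (fun n : ℤ => if (2 : ℤ) ∣ (cb - n) then
              ((u ((cb - n) / 2) : ℝ) : ℂ) else 0) (cb + -2 * k) = ((u k : ℝ) : ℂ) := by
            intro k
            simp only
            rw [if_pos ⟨k, by ring⟩]
            have h1 : (cb - (cb + -2 * k)) / 2 = k := by omega
            rw [h1]
          have hW0 : ∀ n : ℤ, (∀ k : ℤ, n ≠ cb + -2 * k) →
              (fun n : ℤ => if (2 : ℤ) ∣ (cb - n) then ((u ((cb - n) / 2) : ℝ) : ℂ) else 0) n
                = 0 := by
            intro n h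
            simp only
            split_ifs with hd
            · obtain ⟨m, hm⟩ := hd
              exact absurd (by omega : n = cb + -2 * m) (h m)
            · rfl
          rw [fhat1_reindex _ huC cb (-2) (by norm_num) _ hW hW0 ω,
            fhat1_eq_sum _ huC (2 * ω), map_sum, Finset.mul_sum]
          refine Finset.sum_congr rfl fun k hk => ?_
          rw [map_mul, Complex.conj_ofReal, ← Complex.exp_conj]
          rw [conj_exp_arg k (2 * ω)]
          have harg : -(Complex.I) * ((cb : ℂ) + ((-2 : ℤ) : ℂ) * (k : ℂ)) * (ω : ℂ)
              = (-(Complex.I) * (cb : ℂ) * (ω : ℂ)) + Complex.I * (k : ℂ) * ((2 * ω : ℝ) : ℂ) := by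
            push_cast; ring
          rw [harg, Complex.exp_add]
          ring
        rw [hχ, hψ]
        ring
    -- pointwise symmetry of b₂
    have hsym₂ : ∀ k : ℤ, b₂ (cb - k) = ((ε : ℝ) : ℂ) * b₂ k := by
      intro k
      rw [hb₂eq]
      simp only
      have hsw : cb - (cb - k) = k := by ring
      rw [hsw]
      rcases hε with h | h <;> rw [h] <;> push_cast <;> ring
    -- b₂ is real-valued
    have hb₂real : ∀ k : ℤ, (starRingEnd ℂ) (b₂ k) = b₂ k := by
      intro k
      rw [hb₂eq]
      simp only
      rw [map_add, map_mul, map_mul]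
      have c1 : (starRingEnd ℂ) ((1 : ℂ) / 2) = (1 : ℂ) / 2 := by
        rw [map_div₀, map_one, map_ofNat]
      have c2 : (starRingEnd ℂ) (((ε : ℝ) : ℂ) / 2) = ((ε : ℝ) : ℂ) / 2 := by
        rw [map_div₀, Complex.conj_ofReal, map_ofNat]
      rw [c1, c2]
      congr 1 <;> congr 1 <;> split_ifs <;> simp [Complex.conj_ofReal]
    -- b₃ in the time domain
    have hb₃eq : b₃ = (fun n => (-1 : ℂ) ^ (1 - n) * b₂ (1 - n)) := by
      apply fhat1_injective _ _ hb₃fin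
      · refine (hb₂fin.image (fun k => 1 - k)).subset ?_
        intro n hn
        simp only [Function.mem_support] at hn
        have hb' : b₂ (1 - n) ≠ 0 := by
          intro h; exact hn (by rw [h, mul_zero])
        exact ⟨1 - n, hb', by ring⟩
      · intro ω
        rw [hb₃ ω]
        have hsv : Function.support (fun k => (-1 : ℂ) ^ k * b₂ k)
            ⊆ (hb₂fin.toFinset : Set ℤ) := by
          intro k hk
          simp only [Function.mem_support] at hk
          simp only [Set.Finite.coe_toFinset, Function.mem_support]
          intro h; exact hk (by rw [h, mul_zero])
        have hW : ∀ k : ℤ, (fun n => (-1 : ℂ) ^ (1 - n) * b₂ (1 - n)) (1 + (-1) * k)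
            = (-1 : ℂ) ^ k * b₂ k := by
          intro k
          simp only
          have h1 : (1 : ℤ) - (1 + (-1) * k) = k := by ring
          rw [h1]
        have hW0 : ∀ n : ℤ, (∀ k : ℤ, n ≠ 1 + (-1) * k) →
            (fun n => (-1 : ℂ) ^ (1 - n) * b₂ (1 - n)) n = 0 := by
          intro n h
          exact absurd (by ring : n = 1 + (-1) * (1 - n)) (h (1 - n))
        have hsb : Function.support b₂ ⊆ (hb₂fin.toFinset : Set ℤ) := by
          simp
        rw [fhat1_reindex _ hsv 1 (-1) (by norm_num) _ hW hW0 ω,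
          fhat1_eq_sum b₂ hsb (ω + π), map_sum, Finset.mul_sum]
        refine Finset.sum_congr rfl fun k hk => ?_
        rw [map_mul, hb₂real k, ← Complex.exp_conj]
        rw [conj_exp_arg k (ω + π)]
        have hsplit : Complex.I * (k : ℂ) * ((ω + π : ℝ) : ℂ)
            = Complex.I * (k : ℂ) * (ω : ℂ) + (k : ℂ) * ((π : ℂ) * Complex.I) := by
          push_cast; ring
        rw [hsplit, Complex.exp_add, Complex.exp_int_mul, Complex.exp_pi_mul_I]
        have harg : -(Complex.I) * (((1 : ℤ) : ℂ) + ((-1 : ℤ) : ℂ) * (k : ℂ)) * (ω : ℂ)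
            = -(Complex.I) * (ω : ℂ) + Complex.I * (k : ℂ) * (ω : ℂ) := by
          push_cast; ring
        rw [harg, Complex.exp_add]
        ring
    refine ⟨⟨((εa : ℝ) : ℂ) * (-1 : ℂ) ^ ca, ?_, 2 - ca, ?_⟩,
      ⟨((ε : ℝ) : ℂ), ?_, cb, hsym₂⟩,
      ⟨-(((ε : ℝ) : ℂ)), ?_, 2 - cb, ?_⟩⟩
    · rcases hεa with h | h <;> rcases Int.even_or_odd ca with hca | hca
      · left; rw [h, even_neg_one_zpow hca]; norm_num
      · right; rw [h, hca.neg_one_zpow]; norm_num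
      · right; rw [h, even_neg_one_zpow hca]; norm_num
      · left; rw [h, hca.neg_one_zpow]; norm_num
    · intro k
      rw [hb₁eq]
      simp only
      have h1 : (1 : ℤ) - (2 - ca - k) = ca - (1 - k) := by ring
      rw [h1, hasym (1 - k), neg_one_zpow_sub]
      push_cast
      ring
    · rcases hε with h | h
      · left; rw [h]; norm_num
      · right; rw [h]; push_cast; ring
    · rcases hε with h | h
      · right; rw [h]; norm_num
      · left; rw [h]; push_cast; ring
    · intro k
      rw [hb₃eq]
      simp only
      have h1 : (1 : ℤ) - (2 - cb - k) = cb - (1 - k) := by ring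
      rw [h1, hsym₂ (1 - k), neg_one_zpow_sub, hcb.neg_one_zpow]
      ring
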